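/- arXiv:0912.1476 — 2 statements merged into one kernel-verified Lean document; each statement's English description precedes it below -/
import Mathlib

section
/- Let V be a finite-dimensional real inner product space, N : V → V a nilpotent linear operator, H : V → V a diagonalizable linear operator with real eigenvalues, and X ∈ V a nonzero vector. Write X = Σ_α X_α as a sum of eigenvectors of H with eigenvalues α, and let λ = max{α : X_α ≠ 0}. Let Y = Σ_{α = λ} X_α and l = max{n : Nⁿ Y ≠ 0}. Then lim_{t→∞} ‖exp(tN) exp(tH) X‖ / ((e^{λt} t^l / l!)·‖Nˡ Y‖) = 1, and consequently lim_{t→∞} (1/t) log ‖exp(tN) exp(tH) X‖ = λ. -/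
open Filter Topology NormedSpace
set_option synthInstance.maxHeartbeats 1000000
set_option maxHeartbeats 1000000

lemma exp_apply_eigen' {V : Type*} [NormedAddCommGroup V] [NormedSpace ℝ V]
    [CompleteSpace V]
    (A : V →L[ℝ] V) (μ : ℝ) (v : V) (h : A v = μ • v) :
    NormedSpace.exp A v = Real.exp μ • v := by
  have hpow : ∀ n : ℕ, (A ^ n) v = μ ^ n • v := by
    intro n
    induction n with
    | zero => simp
    | succ n ih =>
      rw [pow_succ, ContinuousLinearMap.mul_apply, h, map_smul, ih, smul_smul, pow_succ]
      ring_nf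
  have hs : Summable fun n : ℕ => ((n.factorial : ℝ)⁻¹) • A ^ n :=
    NormedSpace.expSeries_summable' (𝕂 := ℝ) A
  have hmap := (ContinuousLinearMap.apply ℝ V v).map_tsum hs
  rw [exp_eq_tsum (𝕂 := ℝ)]
  simp only [ContinuousLinearMap.apply_apply] at hmap
  rw [hmap]
  have hc : ∀ n : ℕ, ((n.factorial : ℝ)⁻¹ • A ^ n) v = ((n.factorial : ℝ)⁻¹ * μ ^ n) • v := by
    intro n
    rw [ContinuousLinearMap.smul_apply, hpow, smul_smul]
  rw [tsum_congr hc, Summable.tsum_smul_const ?_]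
  · congr 1
    rw [Real.exp_eq_exp_ℝ, exp_eq_tsum (𝕂 := ℝ)]
    simp [smul_eq_mul]
  · simpa [smul_eq_mul] using NormedSpace.expSeries_summable' (𝕂 := ℝ) μ

lemma exp_nilp_eq' {V : Type*} [NormedAddCommGroup V] [NormedSpace ℝ V] [CompleteSpace V]
    (N : V →L[ℝ] V) (m : ℕ) (hm : N ^ m = 0) (t : ℝ) :
    NormedSpace.exp (t • N) = ∑ n ∈ Finset.range m, (t ^ n / (n.factorial : ℝ)) • N ^ n := by
  rw [exp_eq_tsum (𝕂 := ℝ)]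
  show ∑' n : ℕ, ((n.factorial : ℝ)⁻¹) • (t • N) ^ n = _
  rw [tsum_eq_sum (s := Finset.range m) (fun n hn => ?_)]
  · refine Finset.sum_congr rfl fun n _ => ?_
    rw [smul_pow, smul_smul]
    congr 1
    rw [div_eq_inv_mul, mul_comm]
  · have h0 : N ^ n = 0 := by
      have hmn : m ≤ n := by simpa using hn
      calc N ^ n = N ^ m * N ^ (n - m) := by rw [← pow_add, Nat.add_sub_cancel' hmn]
      _ = 0 := by rw [hm, zero_mul]
    rw [smul_pow, h0, smul_zero, smul_zero]

lemma aux_tendsto' (c : ℝ) (n l : ℕ) (hc0 : 0 ≤ c) (h : 0 < c ∨ n < l) :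
    Tendsto (fun t : ℝ => Real.exp (-(c * t)) * (t ^ n / t ^ l)) atTop (𝓝 0) := by
  rcases h with hc | hnl
  · have hupper : Tendsto (fun t : ℝ => t ^ n * Real.exp (-(c * t))) atTop (𝓝 0) := by
      have h1 : Tendsto (fun t : ℝ => c * t) atTop atTop :=
        tendsto_id.const_mul_atTop hc
      have h3 : Tendsto (fun t : ℝ => (c * t) ^ n * Real.exp (-(c * t))) atTop (𝓝 0) :=
        (Real.tendsto_pow_mul_exp_neg_atTop_nhds_zero n).comp h1
      have h4 := h3.const_mul ((c ^ n)⁻¹)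
      rw [mul_zero] at h4
      refine h4.congr' ?_
      filter_upwards [eventually_gt_atTop 0] with t ht
      rw [mul_pow]
      field_simp
    refine squeeze_zero' ?_ ?_ hupper
    · filter_upwards [eventually_gt_atTop 0] with t ht
      positivity
    · filter_upwards [eventually_ge_atTop 1] with t ht
      rw [mul_comm]
      gcongr
      have h1 : (0:ℝ) < t ^ l := by positivity
      rw [div_le_iff₀ h1]
      nlinarith [pow_le_pow_right₀ ht (Nat.zero_le l), pow_nonneg (le_trans zero_le_one ht) n]
  · refine squeeze_zero' ?_ ?_ tendsto_inv_atTop_zero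
    · filter_upwards [eventually_gt_atTop 0] with t ht
      positivity
    · filter_upwards [eventually_ge_atTop 1] with t ht
      have ht0 : (0:ℝ) < t := lt_of_lt_of_le zero_lt_one ht
      calc Real.exp (-(c * t)) * (t ^ n / t ^ l) ≤ 1 * (t ^ n / t ^ l) := by
            have hr : (0:ℝ) ≤ t ^ n / t ^ l := by positivity
            gcongr
            rw [Real.exp_le_one_iff, neg_nonpos]
            positivity
      _ = t ^ n / t ^ l := one_mul _
      _ ≤ t⁻¹ := by
            rw [div_le_iff₀ (by positivity), inv_mul_eq_div, le_div_iff₀ ht0]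
            calc t ^ n * t = t ^ (n + 1) := by rw [pow_succ]
            _ ≤ t ^ l := pow_le_pow_right₀ ht hnl

/-- Growth rate of `exp(tN) exp(tH) X` where `N` is nilpotent, `H` is
diagonalizable with real eigenvalues and `X = ∑ X_α` in eigencomponents. -/
theorem growth_rate_exp_nilpotent_hyperbolic
    {V : Type*} [NormedAddCommGroup V] [InnerProductSpace ℝ V]
    [FiniteDimensional ℝ V]
    (N H : V →L[ℝ] V) (hN : IsNilpotent N)
    (S : Finset ℝ) (comp : ℝ → V)
    (heig : ∀ α ∈ S, H (comp α) = α • comp α)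
    (X : V) (hX : X ≠ 0) (hXsum : X = ∑ α ∈ S, comp α)
    (lam : ℝ) (hlamS : lam ∈ S) (hlamne : comp lam ≠ 0)
    (hlammax : ∀ α ∈ S, comp α ≠ 0 → α ≤ lam)
    (l : ℕ) (hl : (N ^ l) (comp lam) ≠ 0) (hl1 : (N ^ (l + 1)) (comp lam) = 0) :
    Tendsto (fun t : ℝ =>
        ‖NormedSpace.exp (t • N) (NormedSpace.exp (t • H) X)‖ /
          ((Real.exp (lam * t) * t ^ l / (Nat.factorial l)) * ‖(N ^ l) (comp lam)‖))
      atTop (𝓝 1) ∧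
    Tendsto (fun t : ℝ =>
        (1 / t) * Real.log ‖NormedSpace.exp (t • N) (NormedSpace.exp (t • H) X)‖) atTop (𝓝 lam) := by
  obtain ⟨m, hm⟩ := hN
  set Z := (N ^ l) (comp lam) with hZdef
  have hZne : Z ≠ 0 := hl
  have hZpos : (0:ℝ) < ‖Z‖ := norm_pos_iff.mpr hZne
  have hlm : l < m := by
    by_contra hcon
    push_neg at hcon
    have : N ^ l = 0 := by
      calc N ^ l = N ^ m * N ^ (l - m) := by rw [← pow_add, Nat.add_sub_cancel' hcon]
      _ = 0 := by rw [hm, zero_mul]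
    rw [hZdef, this] at hZne
    simp at hZne
  set f : ℝ → V := fun t => NormedSpace.exp (t • N) (NormedSpace.exp (t • H) X) with hfdef
  set D : ℝ → ℝ := fun t => Real.exp (lam * t) * t ^ l / (Nat.factorial l) with hDdef
  have hDpos : ∀ t : ℝ, 0 < t → 0 < D t := by
    intro t ht
    have : (0:ℝ) < (Nat.factorial l : ℝ) := by positivity
    positivity
  -- key expansion
  have key : ∀ t : ℝ, f t = ∑ α ∈ S, ∑ n ∈ Finset.range m,
      (Real.exp (t * α) * (t ^ n / (n.factorial : ℝ))) • (N ^ n) (comp α) := by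
    intro t
    have hH : NormedSpace.exp (t • H) X = ∑ α ∈ S, Real.exp (t * α) • comp α := by
      rw [hXsum, map_sum]
      refine Finset.sum_congr rfl fun α hα => ?_
      exact exp_apply_eigen' (t • H) (t * α) (comp α) (by
        rw [ContinuousLinearMap.smul_apply, heig α hα, smul_smul])
    rw [hfdef]
    simp only [hH, map_sum, map_smul]
    refine Finset.sum_congr rfl fun α hα => ?_
    rw [exp_nilp_eq' N m hm t, ContinuousLinearMap.sum_apply, Finset.smul_sum]
    refine Finset.sum_congr rfl fun n hn => ?_
    rw [ContinuousLinearMap.smul_apply, smul_smul]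
  set h : ℝ → V := fun t => (D t)⁻¹ • f t with hhdef
  -- limits of individual summands
  set L : ℝ → ℕ → V := fun α n => if α = lam ∧ n = l then Z else 0 with hLdef
  have hterm : ∀ α ∈ S, ∀ n ∈ Finset.range m,
      Tendsto (fun t : ℝ => ((D t)⁻¹ * (Real.exp (t * α) * (t ^ n / (n.factorial : ℝ)))) •
        (N ^ n) (comp α)) atTop (𝓝 (L α n)) := by
    intro α hα n hn
    by_cases hv : (N ^ n) (comp α) = 0
    · have hL0 : L α n = 0 := by
        rw [hLdef]
        simp only
        rw [if_neg]
        rintro ⟨rfl, rfl⟩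
        exact hl hv
      rw [hL0]
      simp only [hv, smul_zero]
      exact tendsto_const_nhds
    · have hcompne : comp α ≠ 0 := by
        intro h0
        apply hv
        rw [h0, map_zero]
      have hle : α ≤ lam := hlammax α hα hcompne
      by_cases hcase : α = lam ∧ n = l
      · obtain ⟨rfl, rfl⟩ := hcase
        have hL : L α n = Z := by rw [hLdef]; simp
        rw [hL]
        refine Tendsto.congr' ?_ (tendsto_const_nhds (x := Z))
        filter_upwards [eventually_gt_atTop 0] with t ht
        have hDne : D t ≠ 0 := (hDpos t ht).ne'
        have : Real.exp (t * α) * (t ^ n / (n.factorial : ℝ)) = D t := by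
          rw [hDdef]
          simp only
          rw [mul_comm t α]
          ring
        rw [this, inv_mul_cancel₀ hDne, one_smul]
      · have hL0 : L α n = 0 := by rw [hLdef]; simp only; rw [if_neg hcase]
        rw [hL0]
        have hor : α < lam ∨ (α = lam ∧ n < l) := by
          rcases lt_or_eq_of_le hle with hlt | heq
          · exact Or.inl hlt
          · right
            refine ⟨heq, ?_⟩
            have hne : n ≠ l := fun hnl => hcase ⟨heq, hnl⟩
            rcases lt_or_gt_of_ne hne with h1 | h1
            · exact h1
            · exfalso
              apply hv
              have : N ^ n = N ^ (n - (l+1)) * N ^ (l + 1) := by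
                rw [← pow_add, Nat.sub_add_cancel h1]
              rw [heq, this, ContinuousLinearMap.mul_apply, hl1, map_zero]
        set c : ℝ := lam - α with hcdef
        have hc0 : 0 ≤ c := by rw [hcdef]; linarith
        have hor' : 0 < c ∨ n < l := by
          rcases hor with h1 | ⟨h1, h2⟩
          · left; rw [hcdef]; linarith
          · right; exact h2
        have htd := ((aux_tendsto' c n l hc0 hor').const_mul
          ((Nat.factorial l : ℝ) / (Nat.factorial n : ℝ))).smul_const ((N ^ n) (comp α))
        rw [mul_zero, zero_smul] at htd
        refine Tendsto.congr' ?_ htd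
        filter_upwards [eventually_gt_atTop 0] with t ht
        congr 1
        have hexp : Real.exp (t * α) = Real.exp (-(c * t)) * Real.exp (lam * t) := by
          rw [← Real.exp_add]
          congr 1
          rw [hcdef]
          ring
        rw [hDdef]
        simp only
        have hfl : (Nat.factorial l : ℝ) ≠ 0 := by positivity
        have hfn : (Nat.factorial n : ℝ) ≠ 0 := by positivity
        have htl : t ^ l ≠ 0 := by positivity
        have hel : Real.exp (lam * t) ≠ 0 := Real.exp_ne_zero _
        rw [hexp]
        field_simp [hexp]
  -- tendsto of h
  have hsum : ∑ α ∈ S, ∑ n ∈ Finset.range m, L α n = Z := by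
    rw [Finset.sum_eq_single_of_mem lam hlamS]
    · rw [Finset.sum_eq_single_of_mem l (Finset.mem_range.mpr hlm)]
      · rw [hLdef]; simp
      · intro n _ hne
        rw [hLdef]; simp only; rw [if_neg (fun hc => hne hc.2)]
    · intro α _ hne
      refine Finset.sum_eq_zero fun n _ => ?_
      rw [hLdef]; simp only; rw [if_neg (fun hc => hne hc.1)]
  have htendh : Tendsto h atTop (𝓝 Z) := by
    rw [← hsum]
    have := tendsto_finset_sum S (fun α hα =>
      tendsto_finset_sum (Finset.range m) (fun n hn => hterm α hα n hn))
    refine Tendsto.congr (fun t => ?_) this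
    rw [hhdef]
    simp only [key t, Finset.smul_sum, smul_smul]
  have hnorm : Tendsto (fun t => ‖h t‖) atTop (𝓝 ‖Z‖) := htendh.norm
  have hfnorm : ∀ᶠ t in (atTop : Filter ℝ), 0 < t → ‖f t‖ = D t * ‖h t‖ := by
    filter_upwards with t
    intro ht
    have hDp := hDpos t ht
    rw [hhdef]
    simp only [norm_smul, norm_inv, Real.norm_eq_abs, abs_of_pos hDp]
    field_simp
  constructor
  · -- part 1
    have h1 : Tendsto (fun t => ‖h t‖ / ‖Z‖) atTop (𝓝 1) := by
      have := hnorm.div_const ‖Z‖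
      rwa [div_self hZpos.ne'] at this
    refine Tendsto.congr' ?_ h1
    filter_upwards [eventually_gt_atTop 0, hfnorm] with t ht hfn
    have hDp := hDpos t ht
    show ‖h t‖ / ‖Z‖ = ‖f t‖ / (D t * ‖Z‖)
    rw [hfn ht, mul_div_mul_left _ _ hDp.ne']
  · -- part 2
    have hhpos : ∀ᶠ t in (atTop : Filter ℝ), 0 < ‖h t‖ :=
      hnorm.eventually (eventually_gt_nhds hZpos)
    have hlog1 : Tendsto (fun t : ℝ => Real.log t / t) atTop (𝓝 0) :=
      Real.isLittleO_log_id_atTop.tendsto_div_nhds_zero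
    have hlog2 : Tendsto (fun t : ℝ => Real.log (Nat.factorial l : ℝ) / t) atTop (𝓝 0) :=
      tendsto_const_nhds.div_atTop tendsto_id
    have hlog3 : Tendsto (fun t : ℝ => Real.log ‖h t‖ / t) atTop (𝓝 0) := by
      exact Tendsto.div_atTop (a := Real.log ‖Z‖)
        (((Real.continuousAt_log hZpos.ne').tendsto).comp hnorm) tendsto_id
    have hcomb : Tendsto (fun t : ℝ =>
        lam + ((l : ℝ) * (Real.log t / t) - Real.log (Nat.factorial l : ℝ) / t
          + Real.log ‖h t‖ / t)) atTop (𝓝 (lam + ((l : ℝ) * 0 - 0 + 0))) :=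
      tendsto_const_nhds.add (((hlog1.const_mul _).sub hlog2).add hlog3)
    rw [show lam + ((l : ℝ) * 0 - 0 + 0) = lam by ring] at hcomb
    refine Tendsto.congr' ?_ hcomb
    filter_upwards [eventually_gt_atTop 0, hfnorm, hhpos] with t ht hfn hhp
    have hDp := hDpos t ht
    rw [hfn ht]
    have hlogD : Real.log (D t) = lam * t + (l : ℝ) * Real.log t
        - Real.log (Nat.factorial l : ℝ) := by
      rw [hDdef]
      simp only
      rw [Real.log_div (by positivity) (by positivity), Real.log_mul (Real.exp_ne_zero _)
        (by positivity), Real.log_exp, Real.log_pow]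
    rw [Real.log_mul hDp.ne' hhp.ne', hlogD]
    field_simp
    ring
end

section
/- Let (X, d) and (X̄, d̄) be metric spaces, φᵗ and φ̄ᵗ flows conjugated by a bi-Lipschitz map ψ (φ̄ᵗ = ψφᵗψ⁻¹), and M ⊆ X with M̄ = ψ(M). Then the metric spectra coincide: Λ(φᵗ, M) = Λ(φ̄ᵗ, M̄), where Λ(φᵗ, M) = {λ(φᵗ, x) : x metric regular}. -/
open Filter Topology Metric

private lemma my_le_infDist {X : Type*} [MetricSpace X] {s : Set X} {x : X} {r : ℝ}
    (hs : s.Nonempty) (h : ∀ y ∈ s, r ≤ dist x y) : r ≤ infDist x s := by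
  by_contra h'
  push_neg at h'
  obtain ⟨y, hy, hlt⟩ := (infDist_lt_iff hs).1 h'
  exact absurd hlt (not_lt.2 (h y hy))

private lemma infDist_image_bounds {X Y : Type*} [MetricSpace X] [MetricSpace Y]
    (ψ : X ≃ Y) {b c : ℝ} (hb : 0 < b) (hc : 0 < c)
    (hlow : ∀ x y : X, b * dist x y ≤ dist (ψ x) (ψ y))
    (hupp : ∀ x y : X, dist (ψ x) (ψ y) ≤ c * dist x y)
    (M : Set X) (z : X) :
    b * infDist z M ≤ infDist (ψ z) (ψ '' M) ∧
      infDist (ψ z) (ψ '' M) ≤ c * infDist z M := by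
  rcases M.eq_empty_or_nonempty with rfl | hM
  · simp
  constructor
  · refine my_le_infDist (hM.image ψ) ?_
    rintro _ ⟨m, hm, rfl⟩
    calc b * infDist z M ≤ b * dist z m :=
          mul_le_mul_of_nonneg_left (infDist_le_dist_of_mem hm) hb.le
      _ ≤ dist (ψ z) (ψ m) := hlow z m
  · have h1 : infDist (ψ z) (ψ '' M) / c ≤ infDist z M := by
      refine my_le_infDist hM ?_
      intro m hm
      rw [div_le_iff₀ hc]
      calc infDist (ψ z) (ψ '' M) ≤ dist (ψ z) (ψ m) :=
            infDist_le_dist_of_mem (Set.mem_image_of_mem ψ hm)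
        _ ≤ c * dist z m := hupp z m
        _ = dist z m * c := mul_comm _ _
    calc infDist (ψ z) (ψ '' M) = infDist (ψ z) (ψ '' M) / c * c := by
          field_simp
      _ ≤ infDist z M * c := mul_le_mul_of_nonneg_right h1 hc.le
      _ = c * infDist z M := mul_comm _ _

private lemma tendsto_log_comparable {f g : ℝ → ℝ} {b c lam : ℝ} (hb : 0 < b) (hc : 0 < c)
    (hf : ∀ᶠ t in atTop, 0 < f t)
    (hbg : ∀ t, b * f t ≤ g t) (hgc : ∀ t, g t ≤ c * f t)
    (h : Tendsto (fun t => (1 / t) * Real.log (f t)) atTop (𝓝 lam)) :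
    Tendsto (fun t => (1 / t) * Real.log (g t)) atTop (𝓝 lam) := by
  have hinv : Tendsto (fun t : ℝ => 1 / t) atTop (𝓝 0) := by
    simpa [one_div] using tendsto_inv_atTop_zero
  have hlo : Tendsto (fun t : ℝ => (1 / t) * (Real.log b + Real.log (f t)))
      atTop (𝓝 lam) := by
    have := (hinv.mul_const (Real.log b)).add h
    simpa [mul_add] using this
  have hhi : Tendsto (fun t : ℝ => (1 / t) * (Real.log c + Real.log (f t)))
      atTop (𝓝 lam) := by
    have := (hinv.mul_const (Real.log c)).add h
    simpa [mul_add] using this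
  apply tendsto_of_tendsto_of_tendsto_of_le_of_le' hlo hhi
  · filter_upwards [hf, eventually_gt_atTop (0 : ℝ)] with t hft ht
    have hbf : 0 < b * f t := mul_pos hb hft
    have hlog : Real.log b + Real.log (f t) ≤ Real.log (g t) := by
      rw [← Real.log_mul hb.ne' hft.ne']
      exact Real.log_le_log hbf (hbg t)
    exact mul_le_mul_of_nonneg_left hlog (by positivity)
  · filter_upwards [hf, eventually_gt_atTop (0 : ℝ)] with t hft ht
    have hg : 0 < g t := lt_of_lt_of_le (mul_pos hb hft) (hbg t)
    have hlog : Real.log (g t) ≤ Real.log c + Real.log (f t) := by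
      rw [← Real.log_mul hc.ne' hft.ne']
      exact Real.log_le_log hg (hgc t)
    exact mul_le_mul_of_nonneg_left hlog (by positivity)

/-- Metric spectra are invariant under bi-Lipschitz conjugation of flows. -/
theorem metric_spectrum_biLipschitz_invariant
    {X Y : Type*} [MetricSpace X] [MetricSpace Y]
    (ψ : X ≃ Y) (b c : ℝ) (hb : 0 < b) (hc : 0 < c)
    (hlow : ∀ x y : X, b * dist x y ≤ dist (ψ x) (ψ y))
    (hupp : ∀ x y : X, dist (ψ x) (ψ y) ≤ c * dist x y)
    (φ : ℝ → X → X) (φbar : ℝ → Y → Y)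
    (hconj : ∀ t : ℝ, ∀ y : Y, φbar t y = ψ (φ t (ψ.symm y)))
    (M : Set X) :
    {lam : ℝ | ∃ x : X, (∀ᶠ t in atTop, 0 < infDist (φ t x) M) ∧
        Tendsto (fun t : ℝ => (1 / t) * Real.log (infDist (φ t x) M))
          atTop (𝓝 lam)} =
    {lam : ℝ | ∃ y : Y, (∀ᶠ t in atTop, 0 < infDist (φbar t y) (ψ '' M)) ∧
        Tendsto (fun t : ℝ => (1 / t) * Real.log (infDist (φbar t y) (ψ '' M)))
          atTop (𝓝 lam)} := by
  have key := infDist_image_bounds ψ hb hc hlow hupp M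
  ext lam
  constructor
  · rintro ⟨x, hpos, hlim⟩
    refine ⟨ψ x, ?_, ?_⟩
    · have hφ : ∀ t, φbar t (ψ x) = ψ (φ t x) := fun t => by
        rw [hconj, ψ.symm_apply_apply]
      filter_upwards [hpos] with t ht
      rw [hφ]
      exact lt_of_lt_of_le (mul_pos hb ht) (key (φ t x)).1
    · have hφ : ∀ t, φbar t (ψ x) = ψ (φ t x) := fun t => by
        rw [hconj, ψ.symm_apply_apply]
      simp only [hφ]
      exact tendsto_log_comparable hb hc hpos
        (fun t => (key (φ t x)).1) (fun t => (key (φ t x)).2) hlim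
  · rintro ⟨y, hpos, hlim⟩
    refine ⟨ψ.symm y, ?_, ?_⟩
    · filter_upwards [hpos] with t ht
      rw [hconj] at ht
      have hle := (key (φ t (ψ.symm y))).2
      nlinarith
    · have hbg : ∀ t, (1 / c) * infDist (φbar t y) (ψ '' M) ≤
          infDist (φ t (ψ.symm y)) M := by
        intro t
        rw [hconj]
        have hle := (key (φ t (ψ.symm y))).2
        rw [one_div, ← div_eq_inv_mul, div_le_iff₀ hc]
        linarith
      have hgc : ∀ t, infDist (φ t (ψ.symm y)) M ≤
          (1 / b) * infDist (φbar t y) (ψ '' M) := by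
        intro t
        rw [hconj]
        have hle := (key (φ t (ψ.symm y))).1
        rw [one_div, ← div_eq_inv_mul, le_div_iff₀ hb]
        linarith
      exact tendsto_log_comparable (by positivity) (by positivity) hpos hbg hgc hlim
end
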